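/- Let g : [0,∞) → [0,∞) be a nonconstant Bernstein function and θ ∈ Θ(T) an ECF (i.e., negative definite on (F(T),∪) with θ(∅)=0 and θ({t})=1). Then the function A ↦ (g(θ(A)) − g(0))/(g(1) − g(0)) is again in Θ(T). -/

import Mathlib

open Finset

/-- `ψ` is negative definite (in the semigroup sense) on `(Finset T, ∪, ∅)`. -/
def NegDef {T : Type*} [DecidableEq T] (ψ : Finset T → ℝ) : Prop :=
  ∀ n : ℕ, 2 ≤ n → ∀ (K : Fin n → Finset T) (a : Fin n → ℝ),
    (∑ j, a j) = 0 → ∑ j, ∑ k, a j * a k * ψ (K j ∪ K k) ≤ 0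

/-- Membership in `Θ(T)`. -/
def IsECF {T : Type*} [DecidableEq T] (θ : Finset T → ℝ) : Prop :=
  (∀ A, 0 ≤ θ A) ∧ NegDef θ ∧ θ ∅ = 0 ∧ ∀ t : T, θ {t} = 1

/-- `g : [0,∞) → [0,∞)` is a Bernstein function: continuous, nonnegative, and
negative definite on the semigroup `([0,∞), +, 0)`. -/
def Bernstein (g : ℝ → ℝ) : Prop :=
  ContinuousOn g (Set.Ici 0) ∧ (∀ x ∈ Set.Ici (0 : ℝ), 0 ≤ g x) ∧
  ∀ n : ℕ, 2 ≤ n → ∀ r : Fin n → ℝ, (∀ i, 0 ≤ r i) → ∀ a : Fin n → ℝ,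
    (∑ i, a i) = 0 → ∑ i, ∑ j, a i * a j * g (r i + r j) ≤ 0

namespace BernTools

def diffs (g : ℝ → ℝ) : List ℝ → ℝ → ℝ
  | [], x => g x
  | w :: l, x => diffs g l (x + w) - diffs g l x

@[simp] lemma diffs_nil (g : ℝ → ℝ) (x : ℝ) : diffs g [] x = g x := rfl

@[simp] lemma diffs_cons (g : ℝ → ℝ) (w : ℝ) (l : List ℝ) (x : ℝ) :
    diffs g (w :: l) x = diffs g l (x + w) - diffs g l x := rfl

lemma diffs_append (g : ℝ → ℝ) (l₁ l₂ : List ℝ) (x : ℝ) :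
    diffs g (l₁ ++ l₂) x = diffs (fun y => diffs g l₂ y) l₁ x := by
  induction l₁ generalizing x with
  | nil => rfl
  | cons w l ih => simp [diffs_cons, ih]

lemma sum_map_neg {α : Type*} (l : List α) (f : α → ℝ) :
    (l.map fun a => -(f a)).sum = -(l.map f).sum := by
  induction l with
  | nil => simp
  | cons a l ih => simp [ih]; ring

lemma sum_map_get {α : Type*} (L : List α) (f : α → ℝ) :
    ∑ i : Fin L.length, f (L.get i) = (L.map f).sum := by
  rw [← List.ofFn_getElem_eq_map, List.sum_ofFn]
  rfl

lemma diffs_sublists (g : ℝ → ℝ) (l : List ℝ) (x : ℝ) :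
    diffs g l x
      = (l.sublists'.map (fun s => (-1:ℝ) ^ (l.length - s.length) * g (x + s.sum))).sum := by
  induction l generalizing x with
  | nil => simp
  | cons w l ih =>
    rw [diffs_cons, ih, ih, List.sublists'_cons]
    rw [List.map_append, List.sum_append, List.map_map]
    have h1 : (l.sublists'.map fun s => (-1:ℝ) ^ ((w::l).length - s.length) * g (x + s.sum))
        = l.sublists'.map fun s => -((-1:ℝ) ^ (l.length - s.length) * g (x + s.sum)) := by
      apply List.map_congr_left
      intro s hs
      have hle : s.length ≤ l.length := (List.mem_sublists'.mp hs).length_le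
      have : (w::l).length - s.length = (l.length - s.length) + 1 := by
        simp only [List.length_cons]; omega
      rw [this, pow_succ]; ring
    have h2 : (l.sublists'.map ((fun s => (-1:ℝ) ^ ((w::l).length - s.length) * g (x + s.sum))
          ∘ List.cons w))
        = l.sublists'.map fun s => (-1:ℝ) ^ (l.length - s.length) * g (x + w + s.sum) := by
      apply List.map_congr_left
      intro s hs
      have hle : s.length ≤ l.length := (List.mem_sublists'.mp hs).length_le
      have h3 : (w::l).length - (w::s).length = l.length - s.length := by
        simp only [List.length_cons]; omega
      simp only [Function.comp_apply, h3, List.sum_cons]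
      ring_nf
    rw [h1, h2, sum_map_neg]
    ring

lemma diffs_const (c : ℝ) (l : List ℝ) (hl : l ≠ []) (x : ℝ) :
    diffs (fun _ => c) l x = 0 := by
  induction l generalizing x with
  | nil => exact absurd rfl hl
  | cons w l ih =>
    rcases eq_or_ne l [] with h | h
    · subst h; simp [diffs]
    · simp [diffs_cons, ih h]

/-- Key consequence of negative definiteness: "paired" iterated differences are ≤ 0. -/
lemma diffs_pair_nonpos (g : ℝ → ℝ)
    (hB : ∀ n : ℕ, 2 ≤ n → ∀ r : Fin n → ℝ, (∀ i, 0 ≤ r i) → ∀ a : Fin n → ℝ,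
      (∑ i, a i) = 0 → ∑ i, ∑ j, a i * a j * g (r i + r j) ≤ 0)
    (l : List ℝ) (hl : l ≠ []) (hpos : ∀ w ∈ l, 0 ≤ w) {x : ℝ} (hx : 0 ≤ x) :
    diffs g (l ++ l) x ≤ 0 := by
  set L := l.sublists' with hL
  have hN : 2 ≤ L.length := by
    rw [hL, List.length_sublists']
    calc 2 = 2 ^ 1 := rfl
    _ ≤ 2 ^ l.length := by
      apply Nat.pow_le_pow_right (by norm_num)
      rcases l with _ | _; exact absurd rfl hl; simp
  set r : Fin L.length → ℝ := fun i => x / 2 + (L.get i).sum with hr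
  set a : Fin L.length → ℝ := fun i => (-1:ℝ) ^ (l.length - (L.get i).length) with ha
  have hrpos : ∀ i, 0 ≤ r i := by
    intro i
    apply add_nonneg (by linarith)
    apply List.sum_nonneg
    intro w hw
    have hmem : L.get i ∈ L := L.get_mem i
    exact hpos w ((List.mem_sublists'.mp hmem).subset hw)
  have hsum : ∑ i, a i = 0 := by
    rw [ha, sum_map_get L (fun s => (-1:ℝ) ^ (l.length - s.length))]
    have := diffs_sublists (fun _ => (1:ℝ)) l 0
    rw [diffs_const _ l hl] at this
    simpa using this.symm
  have key := hB L.length hN r hrpos a hsum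
  have heq : ∑ i, ∑ j, a i * a j * g (r i + r j) = diffs g (l ++ l) x := by
    have hinner : ∀ s : List ℝ,
        (∑ j : Fin L.length, (-1:ℝ) ^ (l.length - (L.get j).length)
            * g (x / 2 + s.sum + (x / 2 + (L.get j).sum)))
          = (L.map (fun t => (-1:ℝ) ^ (l.length - t.length)
              * g (x / 2 + s.sum + (x / 2 + t.sum)))).sum := by
      intro s
      exact sum_map_get L (fun t => (-1:ℝ) ^ (l.length - t.length)
        * g (x / 2 + s.sum + (x / 2 + t.sum)))
    calc ∑ i, ∑ j, a i * a j * g (r i + r j)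
        = ∑ i : Fin L.length, (-1:ℝ) ^ (l.length - (L.get i).length) *
            (L.map (fun t => (-1:ℝ) ^ (l.length - t.length)
              * g (x / 2 + (L.get i).sum + (x / 2 + t.sum)))).sum := by
          apply Finset.sum_congr rfl
          intro i _
          rw [← hinner (L.get i), Finset.mul_sum]
          apply Finset.sum_congr rfl
          intro j _
          simp only [ha, hr]
          ring
      _ = (L.map (fun s => (-1:ℝ) ^ (l.length - s.length) *
            (L.map (fun t => (-1:ℝ) ^ (l.length - t.length)
              * g (x / 2 + s.sum + (x / 2 + t.sum)))).sum)).sum :=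
          sum_map_get L (fun s => (-1:ℝ) ^ (l.length - s.length) *
            (L.map (fun t => (-1:ℝ) ^ (l.length - t.length)
              * g (x / 2 + s.sum + (x / 2 + t.sum)))).sum)
      _ = diffs g (l ++ l) x := by
          rw [diffs_append, diffs_sublists (fun y => diffs g l y) l x]
          apply congrArg List.sum
          apply List.map_congr_left
          intro s _
          rw [diffs_sublists g l (x + s.sum)]
          congr 1
          rw [← hL]
          apply congrArg List.sum
          apply List.map_congr_left
          intro t _
          rw [show x / 2 + s.sum + (x / 2 + t.sum) = x + s.sum + t.sum by ring]
  rw [heq] at key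
  exact key

section Grid

/-- The negative-definiteness part of `Bernstein`. -/
def NDef (g : ℝ → ℝ) : Prop :=
  ∀ n : ℕ, 2 ≤ n → ∀ r : Fin n → ℝ, (∀ i, 0 ≤ r i) → ∀ a : Fin n → ℝ,
      (∑ i, a i) = 0 → ∑ i, ∑ j, a i * a j * g (r i + r j) ≤ 0

variable {g : ℝ → ℝ}

lemma even_nonpos (hB : NDef g) {m : ℕ} (hm : 1 ≤ m) {u : ℝ} (hu : 0 ≤ u) {x : ℝ} (hx : 0 ≤ x) :
    diffs g (List.replicate (2*m) u) x ≤ 0 := by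
  have h2 : (2*m) = m + m := by omega
  rw [h2, List.replicate_add]
  apply diffs_pair_nonpos g hB
  · intro h
    rw [← List.length_eq_zero_iff] at h
    simp [List.length_replicate] at h
    omega
  · intro w hw
    rw [List.eq_of_mem_replicate hw]; exact hu
  · exact hx

lemma grid_anti {u : ℝ} (hu : 0 ≤ u) (F : ℝ → ℝ)
    (hF : ∀ y : ℝ, 0 ≤ y → F (y + u) ≤ F y) {x₀ : ℝ} (hx₀ : 0 ≤ x₀) :
    ∀ n : ℕ, F (x₀ + n * u) ≤ F x₀ := by
  intro n
  induction n with
  | zero => simp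
  | succ n ih =>
    have hy : (0:ℝ) ≤ x₀ + n * u := by positivity
    have := hF _ hy
    have harg : x₀ + (n+1 : ℕ) * u = (x₀ + n * u) + u := by push_cast; ring
    rw [harg]
    linarith

lemma grid_grow (ψ : ℕ → ℝ) (d : ℝ) (h : ∀ n : ℕ, ψ n + d ≤ ψ (n+1)) :
    ∀ N : ℕ, ψ 0 + N * d ≤ ψ N := by
  intro N
  induction N with
  | zero => simp
  | succ N ih =>
    have := h N
    have : ψ 0 + (N+1 : ℕ) * d = (ψ 0 + N * d) + d := by push_cast; ring
    rw [this]
    have := h N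
    linarith

lemma odd_nonneg (hB : NDef g) (hg0 : ∀ x : ℝ, 0 ≤ x → 0 ≤ g x) : ∀ k : ℕ, Odd k → ∀ u : ℝ, 0 ≤ u → ∀ x : ℝ, 0 ≤ x →
    0 ≤ diffs g (List.replicate k u) x := by
  intro k
  induction k using Nat.strong_induction_on with
  | _ k ih =>
    intro hk u hu x₀ hx₀
    by_contra hneg
    push_neg at hneg
    -- D j y := diffs g (replicate j u) y
    set D : ℕ → ℝ → ℝ := fun j y => diffs g (List.replicate j u) y with hD
    have hsucc : ∀ j y, D (j+1) y = D j (y + u) - D j y := by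
      intro j y
      rw [hD]
      simp only [List.replicate_succ, diffs_cons]
    have heven : ∀ (m : ℕ), 1 ≤ m → ∀ y : ℝ, 0 ≤ y → D (2*m) y ≤ 0 := by
      intro m hm y hy
      exact even_nonpos hB hm hu hy
    -- D k is nonincreasing along the grid
    have hkante : ∀ y : ℝ, 0 ≤ y → D k (y + u) ≤ D k y := by
      intro y hy
      have : D (k+1) y ≤ 0 := by
        obtain ⟨j, hj⟩ := hk
        have : k + 1 = 2 * (j+1) := by omega
        rw [this]
        exact heven (j+1) (by omega) y hy
      have := hsucc k y
      linarith
    -- ψ n := - D (k-1) (x₀ + n u) grows linearly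
    set ψ : ℕ → ℝ := fun n => - D (k-1) (x₀ + n * u) with hψ
    have hk1 : k - 1 + 1 = k := by
      obtain ⟨j, hj⟩ := hk; omega
    have hgrow : ∀ n : ℕ, ψ n + (- D k x₀) ≤ ψ (n+1) := by
      intro n
      have hy : (0:ℝ) ≤ x₀ + n * u := by positivity
      have h1 : D k (x₀ + n * u) ≤ D k x₀ := grid_anti hu (D k) hkante hx₀ n
      have h2 : D k (x₀ + n*u) = D (k-1) (x₀ + n*u + u) - D (k-1) (x₀ + n*u) := by
        rw [← hsucc (k-1), hk1]
      have harg : x₀ + (n+1 : ℕ) * u = x₀ + n * u + u := by push_cast; ring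
      simp only [hψ, harg]
      linarith
    have hlin : ∀ N : ℕ, ψ 0 + N * (- D k x₀) ≤ ψ N := grid_grow ψ _ hgrow
    -- upper bound for ψ
    have hbound : ∃ C : ℝ, ∀ n : ℕ, ψ n ≤ C := by
      rcases Nat.lt_or_ge k 3 with h3 | h3
      · -- k = 1
        have hk1' : k = 1 := by
          obtain ⟨j, hj⟩ := hk; omega
        refine ⟨0, fun n => ?_⟩
        simp only [hψ, hk1']
        have : 0 ≤ D 0 (x₀ + n * u) := hg0 _ (by positivity)
        linarith
      · -- k ≥ 3 : ψ n ≤ D (k-2) x₀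
        refine ⟨D (k-2) x₀, fun n => ?_⟩
        have hy : (0:ℝ) ≤ x₀ + n * u := by positivity
        have hodd2 : Odd (k-2) := by
          obtain ⟨j, hj⟩ := hk
          refine ⟨j - 1, by omega⟩
        have hpos2 : 0 ≤ D (k-2) (x₀ + n*u + u) :=
          ih (k-2) (by omega) hodd2 u hu _ (by positivity)
        have hsplit : D (k-1) (x₀ + n*u) = D (k-2) (x₀ + n*u + u) - D (k-2) (x₀ + n*u) := by
          rw [← hsucc (k-2)]
          congr 1
          omega
        have hanti2 : ∀ y : ℝ, 0 ≤ y → D (k-2) (y + u) ≤ D (k-2) y := by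
          intro y hy'
          have heq : D (k-1) y = D (k-2) (y+u) - D (k-2) y := by
            rw [← hsucc (k-2)]; congr 1; omega
          have : D (k-1) y ≤ 0 := by
            obtain ⟨j, hj⟩ := hk
            have : k - 1 = 2 * ((k-1)/2) := by omega
            rw [this]
            exact heven _ (by omega) y hy'
          linarith
        have hmon : D (k-2) (x₀ + n*u) ≤ D (k-2) x₀ := grid_anti hu _ hanti2 hx₀ n
        simp only [hψ]
        linarith
    obtain ⟨C, hC⟩ := hbound
    have hd : 0 < - D k x₀ := by simpa [hD] using hneg
    obtain ⟨N, hN⟩ := exists_nat_gt ((C - ψ 0) / (- D k x₀))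
    have : (C - ψ 0) < N * (- D k x₀) := by
      rw [div_lt_iff₀ hd] at hN
      linarith
    have := hlin N
    have := hC N
    linarith

lemma replicate_sign (hB : NDef g) (hg0 : ∀ x : ℝ, 0 ≤ x → 0 ≤ g x) (k : ℕ) (hk : 1 ≤ k) {u : ℝ} (hu : 0 ≤ u) {x : ℝ} (hx : 0 ≤ x) :
    (-1:ℝ) ^ k * diffs g (List.replicate k u) x ≤ 0 := by
  rcases Nat.even_or_odd k with he | ho
  · rw [he.neg_one_pow, one_mul]
    obtain ⟨m, hm⟩ := he
    have hkm : k = 2 * m := by omega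
    rw [hkm]
    exact even_nonpos hB (by omega) hu hx
  · rw [ho.neg_one_pow]
    have := odd_nonneg hB hg0 k ho u hu x hx
    linarith

lemma diffs_zero_mem (g : ℝ → ℝ) {l : List ℝ} (h : (0:ℝ) ∈ l) (x : ℝ) :
    diffs g l x = 0 := by
  induction l generalizing x with
  | nil => simp at h
  | cons w l ih =>
    rcases List.mem_cons.mp h with h | h
    · rw [← h]; simp [diffs_cons]
    · simp [diffs_cons, ih h]

lemma diffs_split (g : ℝ → ℝ) (a b : ℝ) (l : List ℝ) (x : ℝ) :
    diffs g ((a + b) :: l) x = diffs g (a :: l) x + diffs g (b :: l) (x + a) := by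
  simp only [diffs_cons]
  rw [show x + (a + b) = x + a + b by ring]
  ring

lemma diffs_perm (g : ℝ → ℝ) {l l' : List ℝ} (h : l.Perm l') (x : ℝ) :
    diffs g l x = diffs g l' x := by
  induction h generalizing x with
  | nil => rfl
  | cons a _ ih => simp [diffs_cons, ih]
  | swap a b l =>
    simp only [diffs_cons]
    rw [show x + a + b = x + b + a by ring]
    ring
  | trans _ _ ih1 ih2 => rw [ih1, ih2]

lemma multiples_sign (hB : NDef g) (hg0 : ∀ x : ℝ, 0 ≤ x → 0 ≤ g x) :
    ∀ (Sm : ℕ) (ps : List ℕ), ps.sum ≤ Sm → ps ≠ [] → ∀ u : ℝ, 0 ≤ u → ∀ x : ℝ, 0 ≤ x →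
    (-1:ℝ) ^ ps.length * diffs g (ps.map (fun p : ℕ => (p:ℝ) * u)) x ≤ 0 := by
  intro Sm
  induction Sm with
  | zero =>
    intro ps hsum hne u hu x hx
    -- all entries are 0
    have : (0:ℝ) ∈ ps.map (fun p : ℕ => (p:ℝ) * u) := by
      rcases List.exists_mem_of_ne_nil ps hne with ⟨p, hp⟩
      have hp0 : p = 0 := by
        have := List.le_sum_of_mem hp
        omega
      exact List.mem_map.mpr ⟨p, hp, by simp [hp0]⟩
    rw [diffs_zero_mem g this]
    simp
  | succ Sm ih =>
    intro ps hsum hne u hu x hx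
    by_cases h0 : (0:ℕ) ∈ ps
    · have : (0:ℝ) ∈ ps.map (fun p : ℕ => (p:ℝ) * u) :=
        List.mem_map.mpr ⟨0, h0, by simp⟩
      rw [diffs_zero_mem g this]
      simp
    · by_cases hall : ∀ p ∈ ps, p = 1
      · -- replicate case
        have hrep : ps.map (fun p : ℕ => (p:ℝ) * u) = List.replicate ps.length u := by
          rw [List.eq_replicate_iff]
          constructor
          · simp
          · intro b hb
            rcases List.mem_map.mp hb with ⟨p, hp, hpb⟩
            rw [hall p hp] at hpb
            simp at hpb
            exact hpb.symm
        rw [hrep]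
        apply replicate_sign hB hg0
        · rcases ps with _ | ⟨q, qs⟩
          · exact absurd rfl hne
          · simp
        · exact hu
        · exact hx
      · -- some entry ≥ 2
        push_neg at hall
        obtain ⟨p, hp, hp1⟩ := hall
        have hp2 : 2 ≤ p := by
          rcases Nat.lt_or_ge p 2 with h | h
          · interval_cases p
            · exact absurd hp h0
            · exact absurd rfl hp1
          · exact h
        have hperm : ps.Perm (p :: ps.erase p) := List.perm_cons_erase hp
        have hpermr : (ps.map (fun q : ℕ => (q:ℝ) * u)).Perm
            ((p :: ps.erase p).map (fun q : ℕ => (q:ℝ) * u)) := hperm.map _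
        rw [diffs_perm g hpermr]
        have hsum' : p + (ps.erase p).sum = ps.sum := by
          have := hperm.sum_eq
          simpa using this.symm
        have hlen : ps.length = (ps.erase p).length + 1 := by
          have := hperm.length_eq
          simpa using this
        set qs := ps.erase p with hqs
        have hpcast : ((p:ℝ) * u) = (1:ℝ) * u + ((p - 1 : ℕ) : ℝ) * u := by
          have : ((p - 1 : ℕ) : ℝ) = (p : ℝ) - 1 := by
            push_cast [Nat.cast_sub (by omega : 1 ≤ p)]
            ring
          rw [this]; ring
        simp only [List.map_cons]
        rw [hpcast, diffs_split]
        have e1 : (1:ℝ) * u :: qs.map (fun q : ℕ => (q:ℝ) * u)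
            = (1 :: qs).map (fun q : ℕ => (q:ℝ) * u) := by simp
        have e2 : ((p - 1 : ℕ) : ℝ) * u :: qs.map (fun q : ℕ => (q:ℝ) * u)
            = ((p-1) :: qs).map (fun q : ℕ => (q:ℝ) * u) := by simp
        rw [e1, e2]
        have t1 := ih (1 :: qs) (by simp; omega) (by simp) u hu x hx
        have t2 := ih ((p-1) :: qs) (by simp; omega) (by simp) u hu (x + u) (by linarith)
        have hlen1 : (1 :: qs).length = ps.length := by simp [hlen]
        have hlen2 : ((p-1) :: qs).length = ps.length := by simp [hlen]
        rw [hlen1] at t1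
        rw [hlen2] at t2
        rw [mul_add, show x + 1 * u = x + u by ring]
        linarith

/-- `g` has completely alternating finite differences on `[0,∞)`. -/
def CAlt (g : ℝ → ℝ) : Prop :=
  ∀ l : List ℝ, l ≠ [] → (∀ w ∈ l, 0 ≤ w) → ∀ x : ℝ, 0 ≤ x →
    (-1:ℝ) ^ l.length * diffs g l x ≤ 0

lemma tendsto_list_sum {α : Type*} (L : List α) (F : α → ℕ → ℝ) (G : α → ℝ)
    (h : ∀ a ∈ L, Filter.Tendsto (fun n => F a n) Filter.atTop (nhds (G a))) :
    Filter.Tendsto (fun n => (L.map (fun a => F a n)).sum) Filter.atTop (nhds ((L.map G).sum)) := by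
  induction L with
  | nil => simpa using tendsto_const_nhds
  | cons a L ih =>
    simp only [List.map_cons, List.sum_cons]
    exact (h a (by simp)).add (ih (fun b hb => h b (by simp [hb])))

lemma ndef_to_CAlt (hB : NDef g) (hg0 : ∀ x : ℝ, 0 ≤ x → 0 ≤ g x)
    (hcont : ContinuousOn g (Set.Ici 0)) : CAlt g := by
  intro l hne hpos x hx
  set f : ℕ → ℝ → ℝ := fun n w => ((⌊w * 2^n⌋₊ : ℕ) : ℝ) * ((2:ℝ)^n)⁻¹ with hf
  have hfpos : ∀ n w, 0 ≤ f n w := by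
    intro n w
    apply mul_nonneg (Nat.cast_nonneg _)
    positivity
  have hftend : ∀ w : ℝ, 0 ≤ w → Filter.Tendsto (fun n => f n w) Filter.atTop (nhds w) := by
    intro w hw
    have hlow : Filter.Tendsto (fun n : ℕ => w - ((2:ℝ)^n)⁻¹) Filter.atTop (nhds w) := by
      have h2 : Filter.Tendsto (fun n : ℕ => ((2:ℝ)^n)⁻¹) Filter.atTop (nhds 0) := by
        have he : ∀ n : ℕ, ((2:ℝ)^n)⁻¹ = ((2:ℝ)⁻¹)^n := fun n => (inv_pow 2 n).symm
        simp only [he]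
        exact tendsto_pow_atTop_nhds_zero_of_lt_one (by norm_num) (by norm_num)
      simpa using (tendsto_const_nhds (x := w)).sub h2
    refine tendsto_of_tendsto_of_tendsto_of_le_of_le
      (g := fun n : ℕ => w - ((2:ℝ)^n)⁻¹) (h := fun _ : ℕ => w)
      hlow tendsto_const_nhds ?_ ?_
    · intro n
      have h2 : (0:ℝ) < 2^n := by positivity
      have hlt : w * 2^n < ⌊w * 2^n⌋₊ + 1 := Nat.lt_floor_add_one _
      show w - ((2:ℝ)^n)⁻¹ ≤ ((⌊w * 2^n⌋₊ : ℕ) : ℝ) * ((2:ℝ)^n)⁻¹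
      rw [← mul_le_mul_iff_left₀ h2]
      have e1 : ((⌊w * 2^n⌋₊ : ℕ):ℝ) * ((2:ℝ)^n)⁻¹ * (2:ℝ)^n = (⌊w * 2^n⌋₊ : ℝ) := by
        field_simp
      have e2 : ((2:ℝ)^n)⁻¹ * (2:ℝ)^n = 1 := by field_simp
      rw [e1]
      nlinarith [hlt]
    · intro n
      have h2 : (0:ℝ) < 2^n := by positivity
      have hle : (⌊w * 2^n⌋₊ : ℝ) ≤ w * 2^n := Nat.floor_le (by positivity)
      show ((⌊w * 2^n⌋₊ : ℕ) : ℝ) * ((2:ℝ)^n)⁻¹ ≤ w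
      rw [← mul_le_mul_iff_left₀ h2]
      have e1 : ((⌊w * 2^n⌋₊ : ℕ):ℝ) * ((2:ℝ)^n)⁻¹ * (2:ℝ)^n = (⌊w * 2^n⌋₊ : ℝ) := by
        field_simp
      rw [e1]
      exact hle
  -- each approximation satisfies the inequality
  have happrox : ∀ n : ℕ, (-1:ℝ) ^ l.length * diffs g (l.map (f n)) x ≤ 0 := by
    intro n
    have hmap : l.map (f n) = (l.map (fun w => ⌊w * 2^n⌋₊)).map (fun p : ℕ => (p:ℝ) * ((2:ℝ)^n)⁻¹) := by
      rw [List.map_map]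
      rfl
    have hlen : (l.map (fun w => ⌊w * 2^n⌋₊)).length = l.length := by simp
    rw [hmap, ← hlen]
    apply multiples_sign hB hg0 (l.map (fun w => ⌊w * 2^n⌋₊)).sum _ (le_refl _)
    · simpa using hne
    · positivity
    · exact hx
  -- the approximations converge
  have htend : Filter.Tendsto (fun n => (-1:ℝ) ^ l.length * diffs g (l.map (f n)) x)
      Filter.atTop (nhds ((-1:ℝ) ^ l.length * diffs g l x)) := by
    apply Filter.Tendsto.const_mul
    have heq : ∀ n : ℕ, diffs g (l.map (f n)) x
        = (l.sublists'.map (fun s => (-1:ℝ) ^ (l.length - s.length) * g (x + (s.map (f n)).sum))).sum := by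
      intro n
      rw [diffs_sublists, List.sublists'_map, List.map_map]
      apply congrArg List.sum
      apply List.map_congr_left
      intro s hs
      simp only [Function.comp_apply, List.length_map]
    simp only [heq]
    rw [diffs_sublists g l x]
    apply tendsto_list_sum
    intro s hs
    apply Filter.Tendsto.const_mul
    -- g (x + (s.map (f n)).sum) → g (x + s.sum)
    have hssub : ∀ w ∈ s, w ∈ l := (List.mem_sublists'.mp hs).subset
    have hsum_tend : Filter.Tendsto (fun n => x + (s.map (f n)).sum) Filter.atTop
        (nhds (x + s.sum)) := by
      have : Filter.Tendsto (fun n => (s.map (fun w => f n w)).sum) Filter.atTop (nhds s.sum) := by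
        have := tendsto_list_sum s (fun w n => f n w) id
          (fun w hw => hftend w (hpos w (hssub w hw)))
        simpa using this
      simpa using (tendsto_const_nhds (x := x)).add this
    have hmem : x + s.sum ∈ Set.Ici (0:ℝ) := by
      have : 0 ≤ s.sum := List.sum_nonneg (fun w hw => hpos w (hssub w hw))
      simp only [Set.mem_Ici]; linarith
    have hcw : Filter.Tendsto g (nhdsWithin (x + s.sum) (Set.Ici 0)) (nhds (g (x + s.sum))) :=
      (hcont _ hmem).tendsto
    apply hcw.comp
    apply tendsto_nhdsWithin_of_tendsto_nhds_of_eventually_within _ hsum_tend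
    apply Filter.Eventually.of_forall
    intro n
    have : 0 ≤ (s.map (f n)).sum := by
      apply List.sum_nonneg
      intro w hw
      rcases List.mem_map.mp hw with ⟨v, _, hv⟩
      rw [← hv]; exact hfpos n v
    simp only [Set.mem_Ici]
    linarith
  exact le_of_tendsto htend (Filter.Eventually.of_forall happrox)

/-- completely monotone style condition. -/
def CMon (h : ℝ → ℝ) : Prop :=
  ∀ l : List ℝ, (∀ w ∈ l, 0 ≤ w) → ∀ x : ℝ, 0 ≤ x →
    0 ≤ (-1:ℝ) ^ l.length * diffs h l x

lemma diffs_neg (F : ℝ → ℝ) (l : List ℝ) (x : ℝ) :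
    diffs (fun y => -(F y)) l x = - diffs F l x := by
  induction l generalizing x with
  | nil => rfl
  | cons w l ih => simp only [diffs_cons, ih]; ring

lemma diffs_increment (g : ℝ → ℝ) (w : ℝ) (l : List ℝ) (x : ℝ) :
    diffs (fun r => g (r + w) - g r) l x = diffs g (l ++ [w]) x := by
  rw [diffs_append]
  rfl

lemma CMon_of_CAlt {g : ℝ → ℝ} (hg : CAlt g) {w : ℝ} (hw : 0 ≤ w) :
    CMon (fun r => g (r + w) - g r) := by
  intro l hl x hx
  rw [diffs_increment]
  have := hg (l ++ [w]) (by simp) (by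
    intro v hv
    rcases List.mem_append.mp hv with h | h
    · exact hl v h
    · simp at h; rw [h]; exact hw) x hx
  rw [List.length_append, List.length_singleton, pow_succ] at this
  nlinarith [this]

lemma CMon_shift_sub {h : ℝ → ℝ} (hh : CMon h) {w : ℝ} (hw : 0 ≤ w) :
    CMon (fun r => h r - h (r + w)) := by
  intro l hl x hx
  have he : (fun r => h r - h (r + w)) = (fun r => -((fun y => h (y + w) - h y) r)) := by
    funext r; ring
  rw [he, diffs_neg, diffs_increment]
  have := hh (l ++ [w]) (by
    intro v hv
    rcases List.mem_append.mp hv with h | h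
    · exact hl v h
    · simp at h; rw [h]; exact hw) x hx
  rw [List.length_append, List.length_singleton, pow_succ] at this
  nlinarith [this]

variable {n : ℕ}

/-- lattice-type kernel. -/
def ker (c₀ : ℝ) (cs : List (ℝ × (Fin n → Bool))) (j k : Fin n) : ℝ :=
  c₀ - (cs.map (fun p => if p.2 j && p.2 k then p.1 else 0)).sum

lemma ker_nil (c₀ : ℝ) (j k : Fin n) : ker c₀ [] j k = c₀ := by simp [ker]

lemma ker_cons (c₀ w : ℝ) (X : Fin n → Bool) (cs : List (ℝ × (Fin n → Bool))) (j k : Fin n) :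
    ker c₀ ((w, X) :: cs) j k = ker c₀ cs j k - (if X j && X k then w else 0) := by
  simp only [ker, List.map_cons, List.sum_cons]
  ring

lemma ker_base (c₀ w : ℝ) (cs : List (ℝ × (Fin n → Bool))) (j k : Fin n) :
    ker (c₀ - w) cs j k = ker c₀ cs j k - w := by
  simp only [ker]; ring

lemma kerA : ∀ (cs : List (ℝ × (Fin n → Bool))), (∀ p ∈ cs, 0 ≤ p.1) →
    ∀ (h : ℝ → ℝ), CMon h → ∀ (c₀ : ℝ) (b : Fin n → ℝ),
    (∀ j k, b j ≠ 0 → b k ≠ 0 → 0 ≤ ker c₀ cs j k) →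
    0 ≤ ∑ j, ∑ k, b j * b k * h (ker c₀ cs j k) := by
  intro cs
  induction cs with
  | nil =>
    intro _ h hCM c₀ b hker
    by_cases hz : ∀ j, b j = 0
    · simp [hz]
    · push_neg at hz
      obtain ⟨j₀, hj₀⟩ := hz
      have hc₀ : 0 ≤ c₀ := by
        have := hker j₀ j₀ hj₀ hj₀
        rwa [ker_nil] at this
      have hh : 0 ≤ h c₀ := by
        have := hCM [] (by simp) c₀ hc₀
        simpa using this
      simp only [ker_nil]
      calc (0:ℝ) ≤ ((∑ j, b j) * (∑ j, b j)) * h c₀ :=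
            mul_nonneg (mul_self_nonneg _) hh
      _ = ∑ j, ∑ k, b j * b k * h c₀ := by
          rw [Finset.sum_mul_sum, Finset.sum_mul]
          apply Finset.sum_congr rfl
          intro j _
          rw [Finset.sum_mul]
  | cons p cs ih =>
    intro hw h hCM c₀ b hker
    obtain ⟨w, X⟩ := p
    have hw0 : 0 ≤ w := hw (w, X) (by simp)
    have hw' : ∀ q ∈ cs, 0 ≤ q.1 := fun q hq => hw q (by simp [hq])
    set H2 : ℝ → ℝ := fun r => h r - h (r + w) with hH2
    have hCM2 : CMon H2 := CMon_shift_sub hCM hw0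
    set c : Fin n → ℝ := fun j => if X j then b j else 0 with hc
    have hpt : ∀ j k : Fin n, b j * b k * h (ker c₀ ((w,X) :: cs) j k)
        = b j * b k * h (ker c₀ cs j k) + c j * c k * H2 (ker (c₀ - w) cs j k) := by
      intro j k
      by_cases hj : X j = true
      · by_cases hk : X k = true
        · have : ker c₀ ((w,X) :: cs) j k = ker (c₀ - w) cs j k := by
            rw [ker_cons, ker_base, hj, hk]
            simp
          rw [this, hc]
          simp only [hj, hk, if_true, hH2, ker_base,
            show ker c₀ cs j k - w + w = ker c₀ cs j k from by ring]
          ring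
        · have : ker c₀ ((w,X) :: cs) j k = ker c₀ cs j k := by
            rw [ker_cons]
            simp [hk]
          rw [this, hc]
          simp [hk]
      · have : ker c₀ ((w,X) :: cs) j k = ker c₀ cs j k := by
          rw [ker_cons]
          simp [hj]
        rw [this, hc]
        simp [hj]
    have hsplit : ∑ j, ∑ k, b j * b k * h (ker c₀ ((w,X) :: cs) j k)
        = (∑ j, ∑ k, b j * b k * h (ker c₀ cs j k))
          + ∑ j, ∑ k, c j * c k * H2 (ker (c₀ - w) cs j k) := by
      rw [← Finset.sum_add_distrib]
      apply Finset.sum_congr rfl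
      intro j _
      rw [← Finset.sum_add_distrib]
      apply Finset.sum_congr rfl
      intro k _
      exact hpt j k
    rw [hsplit]
    have h1 : 0 ≤ ∑ j, ∑ k, b j * b k * h (ker c₀ cs j k) := by
      apply ih hw' h hCM c₀ b
      intro j k hj hk
      have := hker j k hj hk
      rw [ker_cons] at this
      have hite : (0:ℝ) ≤ (if X j && X k then w else 0) := by
        split <;> simp [hw0]
      linarith
    have h2 : 0 ≤ ∑ j, ∑ k, c j * c k * H2 (ker (c₀ - w) cs j k) := by
      apply ih hw' H2 hCM2 (c₀ - w) c
      intro j k hj hk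
      have hXj : X j = true ∧ b j ≠ 0 := by
        rw [hc] at hj; simp only at hj
        by_cases hX : X j = true
        · exact ⟨hX, by simpa [hX] using hj⟩
        · exfalso; apply hj; simp [hX]
      have hXk : X k = true ∧ b k ≠ 0 := by
        rw [hc] at hk; simp only at hk
        by_cases hX : X k = true
        · exact ⟨hX, by simpa [hX] using hk⟩
        · exfalso; apply hk; simp [hX]
      have := hker j k hXj.2 hXk.2
      rw [ker_cons, hXj.1, hXk.1] at this
      rw [ker_base]
      simpa using this
    linarith

lemma kerB : ∀ (cs : List (ℝ × (Fin n → Bool))), (∀ p ∈ cs, 0 ≤ p.1) →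
    ∀ (g : ℝ → ℝ), CAlt g → ∀ (c₀ : ℝ) (a : Fin n → ℝ), (∑ j, a j) = 0 →
    (∀ j k, a j ≠ 0 → a k ≠ 0 → 0 ≤ ker c₀ cs j k) →
    ∑ j, ∑ k, a j * a k * g (ker c₀ cs j k) ≤ 0 := by
  intro cs
  induction cs with
  | nil =>
    intro _ g hCA c₀ a hsum _
    simp only [ker_nil]
    have : ∑ j, ∑ k, a j * a k * g c₀ = ((∑ j, a j) * (∑ j, a j)) * g c₀ := by
      rw [Finset.sum_mul_sum, Finset.sum_mul]
      apply Finset.sum_congr rfl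
      intro j _
      rw [Finset.sum_mul]
    rw [this, hsum]
    simp
  | cons p cs ih =>
    intro hw g hCA c₀ a hsum hker
    obtain ⟨w, X⟩ := p
    have hw0 : 0 ≤ w := hw (w, X) (by simp)
    have hw' : ∀ q ∈ cs, 0 ≤ q.1 := fun q hq => hw q (by simp [hq])
    set G2 : ℝ → ℝ := fun r => g (r + w) - g r with hG2
    have hCM2 : CMon G2 := CMon_of_CAlt hCA hw0
    set c : Fin n → ℝ := fun j => if X j then a j else 0 with hc
    have hpt : ∀ j k : Fin n, a j * a k * g (ker c₀ ((w,X) :: cs) j k)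
        = a j * a k * g (ker c₀ cs j k) - c j * c k * G2 (ker (c₀ - w) cs j k) := by
      intro j k
      by_cases hj : X j = true
      · by_cases hk : X k = true
        · have he : ker c₀ ((w,X) :: cs) j k = ker (c₀ - w) cs j k := by
            rw [ker_cons, ker_base, hj, hk]
            simp
          rw [he, hc]
          simp only [hj, hk, if_true, hG2, ker_base,
            show ker c₀ cs j k - w + w = ker c₀ cs j k from by ring]
          ring
        · have he : ker c₀ ((w,X) :: cs) j k = ker c₀ cs j k := by
            rw [ker_cons]; simp [hk]
          rw [he, hc]
          simp [hk]
      · have he : ker c₀ ((w,X) :: cs) j k = ker c₀ cs j k := by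
          rw [ker_cons]; simp [hj]
        rw [he, hc]
        simp [hj]
    have hsplit : ∑ j, ∑ k, a j * a k * g (ker c₀ ((w,X) :: cs) j k)
        = (∑ j, ∑ k, a j * a k * g (ker c₀ cs j k))
          - ∑ j, ∑ k, c j * c k * G2 (ker (c₀ - w) cs j k) := by
      rw [← Finset.sum_sub_distrib]
      apply Finset.sum_congr rfl
      intro j _
      rw [← Finset.sum_sub_distrib]
      apply Finset.sum_congr rfl
      intro k _
      exact hpt j k
    rw [hsplit]
    have h1 : ∑ j, ∑ k, a j * a k * g (ker c₀ cs j k) ≤ 0 := by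
      apply ih hw' g hCA c₀ a hsum
      intro j k hj hk
      have := hker j k hj hk
      rw [ker_cons] at this
      have hite : (0:ℝ) ≤ (if X j && X k then w else 0) := by
        split <;> simp [hw0]
      linarith
    have h2 : 0 ≤ ∑ j, ∑ k, c j * c k * G2 (ker (c₀ - w) cs j k) := by
      apply kerA cs hw' G2 hCM2 (c₀ - w) c
      intro j k hj hk
      have hXj : X j = true ∧ a j ≠ 0 := by
        rw [hc] at hj; simp only at hj
        by_cases hX : X j = true
        · exact ⟨hX, by simpa [hX] using hj⟩
        · exfalso; apply hj; simp [hX]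
      have hXk : X k = true ∧ a k ≠ 0 := by
        rw [hc] at hk; simp only at hk
        by_cases hX : X k = true
        · exact ⟨hX, by simpa [hX] using hk⟩
        · exfalso; apply hk; simp [hX]
      have := hker j k hXj.2 hXk.2
      rw [ker_cons, hXj.1, hXk.1] at this
      rw [ker_base]
      simpa using this
    linarith

end Grid

section Mobius
variable {T : Type*} [DecidableEq T]

lemma exists_coeff_up (L : Finset (Finset T)) (f : Finset T → ℝ) :
    ∃ c : Finset T → ℝ, ∀ A ∈ L, ((L.filter (fun M => A ⊆ M)).sum c) = f A := by
  induction L using Finset.strongInduction with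
  | _ L ih =>
    rcases L.eq_empty_or_nonempty with rfl | hne
    · exact ⟨0, by simp⟩
    · obtain ⟨A₀, hA₀, hmin⟩ := L.exists_minimal hne
      obtain ⟨c', hc'⟩ := ih (L.erase A₀) (Finset.erase_ssubset hA₀)
      refine ⟨Function.update c' A₀
        (f A₀ - ((L.erase A₀).filter (fun M => A₀ ⊆ M)).sum c'), ?_⟩
      intro A hA
      by_cases hAeq : A = A₀
      · subst hAeq
        have hins : L.filter (fun M => A ⊆ M)
            = insert A ((L.erase A).filter (fun M => A ⊆ M)) := by
          ext M
          simp only [Finset.mem_filter, Finset.mem_insert, Finset.mem_erase]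
          constructor
          · rintro ⟨hM, hsub⟩
            by_cases h : M = A
            · exact Or.inl h
            · exact Or.inr ⟨⟨h, hM⟩, hsub⟩
          · rintro (rfl | ⟨⟨_, hM⟩, hsub⟩)
            · exact ⟨hA, Finset.Subset.refl _⟩
            · exact ⟨hM, hsub⟩
        rw [hins, Finset.sum_insert (by simp)]
        rw [Function.update_self]
        have hrest : ((L.erase A).filter (fun M => A ⊆ M)).sum
            (Function.update c' A (f A - ((L.erase A).filter (fun M => A ⊆ M)).sum c'))
            = ((L.erase A).filter (fun M => A ⊆ M)).sum c' := by
          apply Finset.sum_congr rfl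
          intro M hM
          have : M ≠ A := (Finset.mem_erase.mp (Finset.mem_filter.mp hM).1).1
          exact Function.update_of_ne this _ _
        rw [hrest]
        ring
      · have hfe : L.filter (fun M => A ⊆ M) = (L.erase A₀).filter (fun M => A ⊆ M) := by
          ext M
          simp only [Finset.mem_filter, Finset.mem_erase]
          constructor
          · rintro ⟨hM, hsub⟩
            refine ⟨⟨?_, hM⟩, hsub⟩
            rintro rfl
            exact hAeq (Finset.Subset.antisymm hsub (hmin (y := A) hA hsub))
          · rintro ⟨⟨_, hM⟩, hsub⟩
            exact ⟨hM, hsub⟩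
        rw [hfe]
        have hsame : ((L.erase A₀).filter (fun M => A ⊆ M)).sum
            (Function.update c' A₀ (f A₀ - ((L.erase A₀).filter (fun M => A₀ ⊆ M)).sum c'))
            = ((L.erase A₀).filter (fun M => A ⊆ M)).sum c' := by
          apply Finset.sum_congr rfl
          intro M hM
          have : M ≠ A₀ := (Finset.mem_erase.mp (Finset.mem_filter.mp hM).1).1
          exact Function.update_of_ne this _ _
        rw [hsame]
        exact hc' A (Finset.mem_erase.mpr ⟨hAeq, hA⟩)

lemma exists_coeff_down (L : Finset (Finset T)) (f : Finset T → ℝ) :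
    ∃ a : Finset T → ℝ, ∀ M ∈ L, ((L.filter (fun A => A ⊆ M)).sum a) = f M := by
  induction L using Finset.strongInduction with
  | _ L ih =>
    rcases L.eq_empty_or_nonempty with rfl | hne
    · exact ⟨0, by simp⟩
    · obtain ⟨M₁, hM₁, hmax⟩ := L.exists_maximal hne
      obtain ⟨a', ha'⟩ := ih (L.erase M₁) (Finset.erase_ssubset hM₁)
      refine ⟨Function.update a' M₁
        (f M₁ - ((L.erase M₁).filter (fun A => A ⊆ M₁)).sum a'), ?_⟩
      intro M hM
      by_cases hMeq : M = M₁
      · subst hMeq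
        have hins : L.filter (fun A => A ⊆ M)
            = insert M ((L.erase M).filter (fun A => A ⊆ M)) := by
          ext A
          simp only [Finset.mem_filter, Finset.mem_insert, Finset.mem_erase]
          constructor
          · rintro ⟨hA, hsub⟩
            by_cases h : A = M
            · exact Or.inl h
            · exact Or.inr ⟨⟨h, hA⟩, hsub⟩
          · rintro (rfl | ⟨⟨_, hA⟩, hsub⟩)
            · exact ⟨hM, Finset.Subset.refl _⟩
            · exact ⟨hA, hsub⟩
        rw [hins, Finset.sum_insert (by simp)]
        rw [Function.update_self]
        have hrest : ((L.erase M).filter (fun A => A ⊆ M)).sum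
            (Function.update a' M (f M - ((L.erase M).filter (fun A => A ⊆ M)).sum a'))
            = ((L.erase M).filter (fun A => A ⊆ M)).sum a' := by
          apply Finset.sum_congr rfl
          intro A hA
          have : A ≠ M := (Finset.mem_erase.mp (Finset.mem_filter.mp hA).1).1
          exact Function.update_of_ne this _ _
        rw [hrest]
        ring
      · have hfe : L.filter (fun A => A ⊆ M) = (L.erase M₁).filter (fun A => A ⊆ M) := by
          ext A
          simp only [Finset.mem_filter, Finset.mem_erase]
          constructor
          · rintro ⟨hA, hsub⟩
            refine ⟨⟨?_, hA⟩, hsub⟩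
            rintro rfl
            exact hMeq (Finset.Subset.antisymm (hmax (y := M) hM hsub) hsub)
          · rintro ⟨⟨_, hA⟩, hsub⟩
            exact ⟨hA, hsub⟩
        rw [hfe]
        have hsame : ((L.erase M₁).filter (fun A => A ⊆ M)).sum
            (Function.update a' M₁ (f M₁ - ((L.erase M₁).filter (fun A => A ⊆ M₁)).sum a'))
            = ((L.erase M₁).filter (fun A => A ⊆ M)).sum a' := by
          apply Finset.sum_congr rfl
          intro A hA
          have : A ≠ M₁ := (Finset.mem_erase.mp (Finset.mem_filter.mp hA).1).1
          exact Function.update_of_ne this _ _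
        rw [hsame]
        exact ha' M (Finset.mem_erase.mpr ⟨hMeq, hM⟩)

lemma negdef_comp (g : ℝ → ℝ) (hCA : CAlt g) (θ : Finset T → ℝ)
    (hθ0 : ∀ A, 0 ≤ θ A)
    (hND : ∀ m : ℕ, 2 ≤ m → ∀ (K : Fin m → Finset T) (a : Fin m → ℝ),
      (∑ j, a j) = 0 → ∑ j, ∑ k, a j * a k * θ (K j ∪ K k) ≤ 0)
    (n : ℕ) (hn : 2 ≤ n) (K : Fin n → Finset T) (a : Fin n → ℝ) (hsum : ∑ j, a j = 0) :
    ∑ j, ∑ k, a j * a k * g (θ (K j ∪ K k)) ≤ 0 := by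
  classical
  have hFin : Nonempty (Fin n) := ⟨⟨0, by omega⟩⟩
  set L : Finset (Finset T) :=
    ((Finset.univ : Finset (Finset (Fin n))).filter Finset.Nonempty).image (fun s => s.sup K)
    with hLdef
  set top : Finset T := (Finset.univ : Finset (Fin n)).sup K with htopdef
  have htop : top ∈ L := by
    rw [hLdef]
    apply Finset.mem_image.mpr
    exact ⟨Finset.univ, by simp [Finset.univ_nonempty], rfl⟩
  have hK : ∀ j, K j ∈ L := by
    intro j
    rw [hLdef]
    apply Finset.mem_image.mpr
    exact ⟨{j}, by simp, Finset.sup_singleton⟩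
  have hsub_top : ∀ A ∈ L, A ⊆ top := by
    intro A hA
    rw [hLdef] at hA
    obtain ⟨s, _, rfl⟩ := Finset.mem_image.mp hA
    have h := Finset.sup_mono (f := K) (Finset.subset_univ s)
    exact h
  have hunion : ∀ A ∈ L, ∀ B ∈ L, A ∪ B ∈ L := by
    intro A hA B hB
    rw [hLdef] at hA hB ⊢
    obtain ⟨s, hs, rfl⟩ := Finset.mem_image.mp hA
    obtain ⟨t, ht, rfl⟩ := Finset.mem_image.mp hB
    apply Finset.mem_image.mpr
    refine ⟨s ∪ t, ?_, ?_⟩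
    · simp only [Finset.mem_filter, Finset.mem_univ, true_and] at hs ⊢
      exact hs.mono Finset.subset_union_left
    · rw [Finset.sup_union]
      rfl
  obtain ⟨c, hc⟩ := exists_coeff_up L θ
  have htopval : c top = θ top := by
    have h1 := hc top htop
    have hfilter : L.filter (fun M => top ⊆ M) = {top} := by
      ext M
      simp only [Finset.mem_filter, Finset.mem_singleton]
      constructor
      · rintro ⟨hM, hsub⟩
        exact Finset.Subset.antisymm (hsub_top M hM) hsub
      · rintro rfl
        exact ⟨htop, Finset.Subset.refl _⟩
    rw [hfilter, Finset.sum_singleton] at h1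
    exact h1
  -- coefficients at non-top elements are nonpositive
  have hcneg : ∀ M₀ ∈ L, M₀ ≠ top → c M₀ ≤ 0 := by
    intro M₀ hM₀ hMne
    obtain ⟨aM, haM⟩ := exists_coeff_down L (fun M' => if M' = M₀ then (1:ℝ) else 0)
    have hs' : ∀ M ∈ L, (∑ A ∈ L, if A ⊆ M then aM A else 0) = if M = M₀ then (1:ℝ) else 0 := by
      intro M hM
      rw [← Finset.sum_filter]
      exact haM M hM
    have hcard : 2 ≤ L.card := by
      rw [show (2:ℕ) = 1 + 1 from rfl]
      rw [Nat.add_one_le_iff]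
      exact Finset.one_lt_card.mpr ⟨M₀, hM₀, top, htop, hMne⟩
    set e := L.equivFin with he
    set K' : Fin L.card → Finset T := fun i => ↑(e.symm i) with hK'
    set a' : Fin L.card → ℝ := fun i => aM ↑(e.symm i) with ha'
    have hsingle : ∀ G : Finset T → ℝ, (∑ i, G ↑(e.symm i)) = ∑ A ∈ L, G A := by
      intro G
      rw [← Finset.sum_coe_sort L G]
      exact Equiv.sum_comp e.symm (fun x => G ↑x)
    have hsum' : ∑ i, a' i = 0 := by
      rw [ha']
      rw [hsingle aM]
      have hfl : L.filter (fun A => A ⊆ top) = L :=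
        Finset.filter_true_of_mem (fun A hA => hsub_top A hA)
      have h2 := haM top htop
      rw [hfl] at h2
      rw [h2, if_neg (Ne.symm hMne)]
    have hform := hND L.card hcard K' a' hsum'
    have hdouble : ∑ i, ∑ j, a' i * a' j * θ (K' i ∪ K' j)
        = ∑ A ∈ L, ∑ B ∈ L, aM A * aM B * θ (A ∪ B) := by
      calc ∑ i, ∑ j, a' i * a' j * θ (K' i ∪ K' j)
          = ∑ A ∈ L, ∑ j, aM A * a' j * θ (A ∪ K' j) :=
            hsingle (fun A => ∑ j, aM A * a' j * θ (A ∪ K' j))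
        _ = ∑ A ∈ L, ∑ B ∈ L, aM A * aM B * θ (A ∪ B) :=
            Finset.sum_congr rfl (fun A _ => hsingle (fun B => aM A * aM B * θ (A ∪ B)))
    rw [hdouble] at hform
    have hθrep : ∀ A ∈ L, ∀ B ∈ L, θ (A ∪ B) = ∑ M ∈ L, if A ∪ B ⊆ M then c M else 0 := by
      intro A hA B hB
      rw [← Finset.sum_filter]
      exact (hc (A ∪ B) (hunion A hA B hB)).symm
    have hstep : ∑ A ∈ L, ∑ B ∈ L, aM A * aM B * θ (A ∪ B) = c M₀ := by
      calc ∑ A ∈ L, ∑ B ∈ L, aM A * aM B * θ (A ∪ B)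
          = ∑ A ∈ L, ∑ B ∈ L, ∑ M ∈ L,
              (if A ⊆ M then aM A else 0) * (if B ⊆ M then aM B else 0) * c M := by
            apply Finset.sum_congr rfl; intro A hA
            apply Finset.sum_congr rfl; intro B hB
            rw [hθrep A hA B hB, Finset.mul_sum]
            apply Finset.sum_congr rfl; intro M hM
            by_cases h1 : A ⊆ M <;> by_cases h2 : B ⊆ M <;>
              simp [Finset.union_subset_iff, h1, h2]
        _ = ∑ A ∈ L, ∑ M ∈ L, ∑ B ∈ L,
              (if A ⊆ M then aM A else 0) * (if B ⊆ M then aM B else 0) * c M :=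
            Finset.sum_congr rfl (fun A _ => Finset.sum_comm)
        _ = ∑ M ∈ L, ∑ A ∈ L, ∑ B ∈ L,
              (if A ⊆ M then aM A else 0) * (if B ⊆ M then aM B else 0) * c M :=
            Finset.sum_comm
        _ = ∑ M ∈ L, ((∑ A ∈ L, if A ⊆ M then aM A else 0)
              * (∑ B ∈ L, if B ⊆ M then aM B else 0)) * c M := by
            apply Finset.sum_congr rfl; intro M hM
            rw [Finset.sum_mul_sum, Finset.sum_mul]
            apply Finset.sum_congr rfl; intro A _
            rw [Finset.sum_mul]
        _ = c M₀ := by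
            rw [Finset.sum_eq_single_of_mem M₀ hM₀]
            · rw [hs' M₀ hM₀, if_pos rfl]
              ring
            · intro M hM hne
              rw [hs' M hM, if_neg hne]
              ring
    rw [hstep] at hform
    exact hform
  -- assemble the kernel
  set cs : List (ℝ × (Fin n → Bool)) :=
    (L.erase top).toList.map (fun M => (- c M, fun j => decide (K j ⊆ M))) with hcs
  have hwts : ∀ p ∈ cs, 0 ≤ p.1 := by
    intro p hp
    rw [hcs] at hp
    rcases List.mem_map.mp hp with ⟨M, hMl, rfl⟩
    have hML : M ∈ L.erase top := Finset.mem_toList.mp hMl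
    have := hcneg M (Finset.mem_of_mem_erase hML) (Finset.mem_erase.mp hML).1
    simp only []
    linarith
  have hkereq : ∀ j k : Fin n, ker (c top) cs j k = θ (K j ∪ K k) := by
    intro j k
    have hrep := hc (K j ∪ K k) (hunion _ (hK j) _ (hK k))
    have hsplit : L.filter (fun M => K j ∪ K k ⊆ M)
        = insert top ((L.erase top).filter (fun M => K j ∪ K k ⊆ M)) := by
      ext M
      simp only [Finset.mem_filter, Finset.mem_insert, Finset.mem_erase]
      constructor
      · rintro ⟨hM, hsub⟩
        by_cases h : M = top
        · exact Or.inl h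
        · exact Or.inr ⟨⟨h, hM⟩, hsub⟩
      · rintro (rfl | ⟨⟨_, hM⟩, hsub⟩)
        · exact ⟨htop, hsub_top _ (hunion _ (hK j) _ (hK k))⟩
        · exact ⟨hM, hsub⟩
    rw [hsplit, Finset.sum_insert (by simp)] at hrep
    -- hrep : c top + ∑_{(L.erase top).filter (⊆·)} c = θ (K j ∪ K k)
    have hker2 : ker (c top) cs j k
        = c top + ((L.erase top).filter (fun M => K j ∪ K k ⊆ M)).sum c := by
      rw [ker, hcs, List.map_map]
      have hptw : ((L.erase top).toList.map
            ((fun p : ℝ × (Fin n → Bool) => if p.2 j && p.2 k then p.1 else 0)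
              ∘ (fun M => ((- c M, fun j => decide (K j ⊆ M)) : ℝ × (Fin n → Bool)))))
          = ((L.erase top).toList.map (fun M => -(if K j ∪ K k ⊆ M then c M else 0))) := by
        apply List.map_congr_left
        intro M _
        simp only [Function.comp_apply]
        by_cases h1 : K j ⊆ M <;> by_cases h2 : K k ⊆ M <;>
          simp [Finset.union_subset_iff, h1, h2]
      rw [hptw, sum_map_neg, Finset.sum_map_toList]
      rw [Finset.sum_filter]
      ring
    rw [hker2, ← hrep]
  have hker0 : ∀ j k : Fin n, a j ≠ 0 → a k ≠ 0 → 0 ≤ ker (c top) cs j k := by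
    intro j k _ _
    rw [hkereq]
    exact hθ0 _
  have hfinal := kerB cs hwts g hCA (c top) a hsum hker0
  calc ∑ j, ∑ k, a j * a k * g (θ (K j ∪ K k))
      = ∑ j, ∑ k, a j * a k * g (ker (c top) cs j k) := by
        apply Finset.sum_congr rfl; intro j _
        apply Finset.sum_congr rfl; intro k _
        rw [hkereq]
    _ ≤ 0 := hfinal

end Mobius
end BernTools

/-- A nonconstant Bernstein function `g` operates on ECFs: if `θ ∈ Θ(T)` then
`A ↦ (g(θ(A)) − g(0))/(g(1) − g(0))` is again in `Θ(T)`. -/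
theorem Bernstein_operates_on_ECF {T : Type*} [DecidableEq T]
    (g : ℝ → ℝ) (hg : Bernstein g)
    (hnc : ∃ x y : ℝ, 0 ≤ x ∧ 0 ≤ y ∧ g x ≠ g y)
    (θ : Finset T → ℝ) (hθ : IsECF θ) :
    IsECF (fun A => (g (θ A) - g 0) / (g 1 - g 0)) := by
  classical
  obtain ⟨hcont, hg0', hB⟩ := hg
  have hg0 : ∀ x : ℝ, 0 ≤ x → 0 ≤ g x := fun x hx => hg0' x hx
  have hCA : BernTools.CAlt g := BernTools.ndef_to_CAlt hB hg0 hcont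
  obtain ⟨hθ0, hθND, hθempty, hθsingle⟩ := hθ
  have hmono : ∀ x w : ℝ, 0 ≤ x → 0 ≤ w → g x ≤ g (x + w) := by
    intro x w hx hw
    have h := hCA [w] (by simp) (by simp [hw]) x hx
    simp [BernTools.diffs] at h
    linarith
  have hsd : ∀ x y z : ℝ, 0 ≤ x → 0 ≤ y → 0 ≤ z →
      g (x + y + z) - g (x + y) - g (x + z) + g x ≤ 0 := by
    intro x y z hx hy hz
    have h := hCA [y, z] (by simp) (by
      intro w hw
      rcases List.mem_cons.mp hw with h | h
      · rw [h]; exact hy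
      · simp at h; rw [h]; exact hz) x hx
    simp [BernTools.diffs] at h
    linarith
  have hne01 : g 1 ≠ g 0 := by
    intro heq
    have hconst : ∀ N : ℕ, ∀ z : ℝ, 0 ≤ z → z ≤ N → g z = g 0 := by
      intro N
      induction N with
      | zero =>
        intro z h0 h1
        have : z = 0 := le_antisymm (by exact_mod_cast h1) h0
        rw [this]
      | succ N ihN =>
        intro z h0 h1
        by_cases hle : z ≤ N
        · exact ihN z h0 hle
        · push_neg at hle
          set u := z - N with hu
          have hu0 : 0 < u := by simp only [hu]; linarith
          have hu1 : u ≤ 1 := by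
            have : z ≤ (N:ℝ) + 1 := by exact_mod_cast h1
            simp only [hu]; linarith
          have hgu : g u = g 0 := by
            have h2 : g 0 ≤ g u := by
              have := hmono 0 u le_rfl hu0.le
              simpa using this
            have h3 : g u ≤ g 1 := by
              have := hmono u (1 - u) hu0.le (by linarith)
              rw [show u + (1 - u) = 1 by ring] at this
              exact this
            linarith [heq.le, heq.ge]
          have hgN : g N = g 0 := ihN N (Nat.cast_nonneg N) le_rfl
          have hsd2 := hsd 0 (N:ℝ) u le_rfl (Nat.cast_nonneg N) hu0.le
          simp only [zero_add] at hsd2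
          have hz2 : (N:ℝ) + u = z := by simp only [hu]; ring
          rw [hz2] at hsd2
          have hdown : g 0 ≤ g z := by
            have := hmono 0 z le_rfl h0
            simpa using this
          linarith
    obtain ⟨x, y, hx, hy, hxy⟩ := hnc
    obtain ⟨Nx, hNx⟩ := exists_nat_ge x
    obtain ⟨Ny, hNy⟩ := exists_nat_ge y
    exact hxy (by rw [hconst Nx x hx hNx, hconst Ny y hy hNy])
  have hD : 0 < g 1 - g 0 := by
    have hle : g 0 ≤ g 1 := by
      have := hmono 0 1 le_rfl zero_le_one
      simpa using this
    rcases hle.lt_or_eq with h | h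
    · linarith
    · exact absurd h.symm hne01
  refine ⟨?_, ?_, ?_, ?_⟩
  · intro A
    show 0 ≤ (g (θ A) - g 0) / (g 1 - g 0)
    apply div_nonneg _ hD.le
    rw [sub_nonneg]
    have := hmono 0 (θ A) le_rfl (hθ0 A)
    simpa using this
  · intro m hm K a hsum
    have hcomp := BernTools.negdef_comp g hCA θ hθ0 hθND m hm K a hsum
    have hexp : ∀ j k : Fin m, a j * a k * ((g (θ (K j ∪ K k)) - g 0) / (g 1 - g 0))
        = (a j * a k * g (θ (K j ∪ K k))) * (g 1 - g 0)⁻¹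
          - (a j * a k) * (g 0 * (g 1 - g 0)⁻¹) := by
      intro j k
      rw [div_eq_mul_inv]
      ring
    have hstep : ∑ j, ∑ k, a j * a k * ((g (θ (K j ∪ K k)) - g 0) / (g 1 - g 0))
        = (∑ j, ∑ k, a j * a k * g (θ (K j ∪ K k))) * (g 1 - g 0)⁻¹
          - ((∑ j, a j) * (∑ j, a j)) * (g 0 * (g 1 - g 0)⁻¹) := by
      have h1 : ∑ j, ∑ k, a j * a k * ((g (θ (K j ∪ K k)) - g 0) / (g 1 - g 0))
          = (∑ j, ∑ k, (a j * a k * g (θ (K j ∪ K k))) * (g 1 - g 0)⁻¹)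
            - ∑ j, ∑ k, (a j * a k) * (g 0 * (g 1 - g 0)⁻¹) := by
        rw [← Finset.sum_sub_distrib]
        apply Finset.sum_congr rfl
        intro j _
        rw [← Finset.sum_sub_distrib]
        apply Finset.sum_congr rfl
        intro k _
        exact hexp j k
      rw [h1]
      congr 1
      · rw [Finset.sum_mul]
        apply Finset.sum_congr rfl
        intro j _
        rw [Finset.sum_mul]
      · rw [Finset.sum_mul_sum, Finset.sum_mul]
        apply Finset.sum_congr rfl
        intro j _
        rw [Finset.sum_mul]
    rw [hstep, hsum]
    have hinv : 0 ≤ (g 1 - g 0)⁻¹ := inv_nonneg.mpr hD.le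
    nlinarith [hcomp, hinv]
  · show (g (θ ∅) - g 0) / (g 1 - g 0) = 0
    rw [hθempty]
    simp
  · intro t
    show (g (θ {t}) - g 0) / (g 1 - g 0) = 1
    rw [hθsingle t]
    exact div_self (ne_of_gt hD)
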